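/- Let a < b be positive integers with gcd(a,b) = 1 and b ≠ 2. Consider the affine semigroup S = ⟨(0, 2b), (a, 2b-a), (b, b), (a+b, b-a), (2b, 0)⟩ ⊆ ℕ². Then the vector v = (2a, 2b - 2a) satisfies: v + (0, 2b) ∈ S, v + (2b, 0) ∈ S, but v ∉ S. -/

import Mathlib

/-- For coprime `0 < a < b` with `b ≠ 2`, the vector `v = (2a, 2b - 2a)`
satisfies `v + (0, 2b) ∈ S` and `v + (2b, 0) ∈ S` but `v ∉ S`, where `S` is
the affine semigroup generated by `(0,2b), (a,2b-a), (b,b), (a+b,b-a), (2b,0)`. -/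
theorem stmt_9 (a b : ℤ) (ha : 0 < a) (hab : a < b) (hcop : IsCoprime a b)
    (hb2 : b ≠ 2) :
    let S := AddSubmonoid.closure
      ({(0, 2 * b), (a, 2 * b - a), (b, b), (a + b, b - a), (2 * b, 0)} : Set (ℤ × ℤ))
    let v : ℤ × ℤ := (2 * a, 2 * b - 2 * a)
    v + (0, 2 * b) ∈ S ∧ v + (2 * b, 0) ∈ S ∧ v ∉ S := by
  intro S v
  have hb : 0 < b := ha.trans hab
  set s : Set (ℤ × ℤ) :=
    {(0, 2 * b), (a, 2 * b - a), (b, b), (a + b, b - a), (2 * b, 0)} with hs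
  have h2 : (a, 2 * b - a) ∈ S := AddSubmonoid.subset_closure (by simp [hs])
  have h4 : (a + b, b - a) ∈ S := AddSubmonoid.subset_closure (by simp [hs])
  refine ⟨?_, ?_, ?_⟩
  · have : v + (0, 2 * b) = (a, 2 * b - a) + (a, 2 * b - a) := by
      simp only [v, Prod.mk_add_mk, Prod.mk.injEq]; constructor <;> ring
    rw [this]; exact add_mem h2 h2
  · have : v + (2 * b, 0) = (a + b, b - a) + (a + b, b - a) := by
      simp only [v, Prod.mk_add_mk, Prod.mk.injEq]; constructor <;> ring_nf
    rw [this]; exact add_mem h4 h4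
  · intro hv
    -- every element of S is 0, a generator, or has coordinate sum ≥ 4b
    have key : ∀ x ∈ S, x = 0 ∨ (x ∈ s ∧ x.1 + x.2 = 2 * b) ∨ 4 * b ≤ x.1 + x.2 := by
      intro x hx
      refine AddSubmonoid.closure_induction ?_ ?_ ?_ hx
      · intro y hy
        refine Or.inr (Or.inl ⟨hy, ?_⟩)
        simp only [hs, Set.mem_insert_iff, Set.mem_singleton_iff] at hy
        rcases hy with h | h | h | h | h <;> subst h <;> simp <;> ring
      · exact Or.inl rfl
      · rintro x y _ _ (rfl | ⟨hxs, hx2⟩ | hx4) (rfl | ⟨hys, hy2⟩ | hy4)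
        · simp
        · simpa using Or.inr (Or.inl ⟨hys, hy2⟩)
        · simpa using Or.inr (Or.inr hy4)
        · simpa using Or.inr (Or.inl ⟨hxs, hx2⟩)
        · refine Or.inr (Or.inr ?_)
          have : (x + y).1 + (x + y).2 = (x.1 + x.2) + (y.1 + y.2) := by simp; ring
          rw [this, hx2, hy2]; linarith
        · refine Or.inr (Or.inr ?_)
          have : (x + y).1 + (x + y).2 = (x.1 + x.2) + (y.1 + y.2) := by simp; ring
          rw [this, hx2]; linarith
        · simpa using Or.inr (Or.inr hx4)
        · refine Or.inr (Or.inr ?_)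
          have : (x + y).1 + (x + y).2 = (x.1 + x.2) + (y.1 + y.2) := by simp; ring
          rw [this, hy2]; linarith
        · refine Or.inr (Or.inr ?_)
          have : (x + y).1 + (x + y).2 = (x.1 + x.2) + (y.1 + y.2) := by simp; ring
          rw [this]; linarith
    rcases key v hv with h0 | ⟨hvs, _⟩ | h4b
    · rw [Prod.ext_iff] at h0; simp [v] at h0; omega
    · simp only [hs, Set.mem_insert_iff, Set.mem_singleton_iff, v, Prod.ext_iff] at hvs
      rcases hvs with ⟨h1, h2⟩ | ⟨h1, h2⟩ | ⟨h1, h2⟩ | ⟨h1, h2⟩ | ⟨h1, h2⟩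
      · omega
      · omega
      · -- 2a = b, coprime ⇒ a = 1, b = 2
        have : a ∣ b := ⟨2, by omega⟩
        have := (hcop.isUnit_of_dvd' dvd_rfl this)
        rw [Int.isUnit_iff] at this
        omega
      · omega
      · omega
    · simp only [v] at h4b; omega
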